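/- Every need-adjusted geometric rule φ^λ satisfies highest rank splitting neutrality: if the top agent m splits into two agents m and m+1 with r'_m + r'_{m+1} = r_m, z'_m + z'_{m+1} = z_m, and r'_j ≥ z'_j for j = m, m+1, then the allocations to all agents 1, ..., m-1 are unchanged. -/

import Mathlib

/-- The need-adjusted geometric rule with parameter `lam` on the hierarchy
`{0, ..., m-1}` (agent `m-1` is the top-ranked agent). -/
noncomputable def geomRule (lam : ℝ) (m : ℕ) (r z : ℕ → ℝ) (i : ℕ) : ℝ :=
  if i + 1 < m then
    z i + lam * ∑ j ∈ Finset.range (i + 1), (1 - lam) ^ (i - j) * (r j - z j)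
  else
    r i + ∑ j ∈ Finset.range (m - 1), (1 - lam) ^ (m - 1 - j) * (r j - z j)
theorem geometric_rule_highest_rank_splitting_neutrality
    (lam : ℝ) (hlam : lam ∈ Set.Icc (0:ℝ) 1)
    (m : ℕ) (hm : 1 ≤ m) (r z r' z' : ℕ → ℝ)
    (hval : ∀ i < m, 0 ≤ z i ∧ z i ≤ r i)
    (hval' : ∀ i < m + 1, 0 ≤ z' i ∧ z' i ≤ r' i)
    (hagree : ∀ j, j + 1 < m → r' j = r j ∧ z' j = z j)
    (hr : r' (m - 1) + r' m = r (m - 1))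
    (hz : z' (m - 1) + z' m = z (m - 1)) :
    ∀ i, i + 1 < m → geomRule lam (m + 1) r' z' i = geomRule lam m r z i := by
  intro i hi
  have hi' : i + 1 < m + 1 := Nat.lt_succ_of_lt hi
  simp only [geomRule, if_pos hi, if_pos hi']
  have hz' : z' i = z i := (hagree i hi).2
  rw [hz']
  congr 1
  congr 1
  apply Finset.sum_congr rfl
  intro j hj
  have hjm : j + 1 < m := by
    have := Finset.mem_range.mp hj
    omega
  rw [(hagree j hjm).1, (hagree j hjm).2]
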